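/- In Algorithm 5 for graphic matroids, the set A of selected oriented arcs always has in-degree at most 1 at every vertex and contains no set whose underlying undirected edge set is a cycle; consequently the underlying undirected edge set of A is a forest and the output ALG is independent in the graphic matroid. -/

import Mathlib

/-- Invariant of the algorithm for graphic (and hypergraphic) matroids: the oriented
arcs `a_1, …, a_m` are added one at a time, and an arc is added only when both of its
endpoints currently have in-degree `0` (no earlier arc has its head at either
endpoint). Then every vertex has in-degree at most `1` in the final arc set, the
underlying undirected edge set contains no cycle — i.e. it is a forest — and hence
the output is independent in the graphic matroid. -/
theorem graphic_algorithm_forest {V : Type*} (m : ℕ) (arcs : Fin m → V × V)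
    (hloop : ∀ i, (arcs i).1 ≠ (arcs i).2)
    (hadd : ∀ i j : Fin m, j < i →
      (arcs j).2 ≠ (arcs i).1 ∧ (arcs j).2 ≠ (arcs i).2) :
    (∀ v : V, ∀ i j : Fin m, (arcs i).2 = v → (arcs j).2 = v → i = j) ∧
    (SimpleGraph.fromEdgeSet
        {e : Sym2 V | ∃ i : Fin m, e = s((arcs i).1, (arcs i).2)}).IsAcyclic := by
  classical
  set G := SimpleGraph.fromEdgeSet
      {e : Sym2 V | ∃ i : Fin m, e = s((arcs i).1, (arcs i).2)} with hGdef
  -- heads are injective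
  have hheads : ∀ i j : Fin m, (arcs i).2 = (arcs j).2 → i = j := by
    intro i j h
    rcases lt_trichotomy i j with h' | h' | h'
    · exact absurd h (hadd j i h').2
    · exact h'
    · exact absurd h.symm (hadd i j h').2
  have part1 : ∀ v : V, ∀ i j : Fin m, (arcs i).2 = v → (arcs j).2 = v → i = j :=
    fun v i j hi hj => hheads i j (hi.trans hj.symm)
  -- adjacency decoding
  have hadj_iff : ∀ a b : V, G.Adj a b →
      ∃ k : Fin m, (a = (arcs k).1 ∧ b = (arcs k).2) ∨ (a = (arcs k).2 ∧ b = (arcs k).1) := by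
    intro a b h
    rw [hGdef, SimpleGraph.fromEdgeSet_adj] at h
    obtain ⟨k, hk⟩ := h.1
    exact ⟨k, Sym2.eq_iff.mp hk⟩
  -- chain lemma: a path starting at the head of arc `j` (not re-using arc `j`)
  -- ends at the head of some arc `k ≤ j`.
  have chain : ∀ (x y : V) (p : G.Walk x y), p.IsPath → ∀ j : Fin m,
      x = (arcs j).2 → s((arcs j).1, (arcs j).2) ∉ p.edges →
      ∃ k : Fin m, k ≤ j ∧ y = (arcs k).2 := by
    intro x y p
    induction p with
    | nil => exact fun _ j hx _ => ⟨j, le_refl j, hx⟩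
    | @cons x w y hadjx rest ih =>
      intro hp j hx he
      obtain ⟨k, hk | hk⟩ := hadj_iff _ _ hadjx
      · -- x = u_k, w = v_k, forward step
        have hjk : (arcs j).2 = (arcs k).1 := hx.symm.trans hk.1
        have hkj : k < j := by
          rcases lt_trichotomy k j with h' | h' | h'
          · exact h'
          · exact absurd (h' ▸ hjk).symm (hloop j)
          · exact absurd hjk (hadd k j h').1
        have he' : s((arcs k).1, (arcs k).2) ∉ rest.edges := by
          have hnd := hp.isTrail.edges_nodup
          rw [SimpleGraph.Walk.edges_cons, List.nodup_cons] at hnd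
          have heq : s(x, w) = s((arcs k).1, (arcs k).2) := by rw [hk.1, hk.2]
          exact heq ▸ hnd.1
        obtain ⟨k', hk', hy⟩ := ih hp.of_cons k hk.2 he'
        exact ⟨k', le_of_lt (lt_of_le_of_lt hk' hkj), hy⟩
      · -- x = v_k : then k = j and first edge is e_j, contradiction
        have hkj : k = j := hheads k j (hk.1.symm.trans hx)
        exfalso
        apply he
        rw [SimpleGraph.Walk.edges_cons]
        have heq : s(x, w) = s((arcs j).1, (arcs j).2) := by
          rw [hk.1, hk.2, hkj, Sym2.eq_swap]
        exact heq ▸ List.mem_cons_self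
  refine ⟨part1, ?_⟩
  intro v p hp
  have hedges : ∀ e ∈ p.edges, ∃ k : Fin m, e = s((arcs k).1, (arcs k).2) := by
    intro e he
    have h2 := p.edges_subset_edgeSet he
    rw [hGdef, SimpleGraph.edgeSet_fromEdgeSet] at h2
    exact h2.1
  set S : Finset (Fin m) :=
    Finset.univ.filter (fun k => s((arcs k).1, (arcs k).2) ∈ p.edges) with hSdef
  have hSne : S.Nonempty := by
    have hne : p.edges ≠ [] := by
      intro h
      have hlen : p.length = 0 := by rw [← SimpleGraph.Walk.length_edges, h]; rfl
      exact hp.ne_nil (SimpleGraph.Walk.nil_iff_eq_nil.mp (SimpleGraph.Walk.length_eq_zero_iff.mp hlen))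
    obtain ⟨e, he⟩ := List.exists_mem_of_ne_nil _ hne
    obtain ⟨k, hk⟩ := hedges e he
    exact ⟨k, by simp only [hSdef, Finset.mem_filter, Finset.mem_univ, true_and, ← hk]; exact he⟩
  have hiS : S.max' hSne ∈ S := S.max'_mem hSne
  have himax' : ∀ k ∈ S, k ≤ S.max' hSne := fun k hk => S.le_max' k hk
  set i := S.max' hSne with hidef
  clear_value i
  clear hidef
  have himax : ∀ k : Fin m, s((arcs k).1, (arcs k).2) ∈ p.edges → k ≤ i := by
    intro k hk
    exact himax' k (by simp only [hSdef, Finset.mem_filter, Finset.mem_univ, true_and]; exact hk)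
  have hiedge : s((arcs i).1, (arcs i).2) ∈ p.edges := by
    have h3 := hiS
    simp only [hSdef, Finset.mem_filter, Finset.mem_univ, true_and] at h3
    exact h3
  have hvsup : (arcs i).2 ∈ p.support :=
    SimpleGraph.Walk.snd_mem_support_of_mem_edges p hiedge
  have hq : (p.rotate _ hvsup).IsCycle := hp.rotate hvsup
  have hqe : ∀ e, e ∈ (p.rotate _ hvsup).edges ↔ e ∈ p.edges :=
    fun e => (p.rotate_edges _ hvsup).mem_iff
  set q := p.rotate _ hvsup with hqdef
  clear_value q
  clear hqdef
  cases q with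
  | nil => exact hq.ne_nil rfl
  | @cons _ w _ hadjx rest =>
    obtain ⟨hrp, hre⟩ := (SimpleGraph.Walk.cons_isCycle_iff rest hadjx).mp hq
    obtain ⟨k, hk | hk⟩ := hadj_iff _ _ hadjx
    · -- v_i = u_k (forward along arc k), w = v_k
      have hki : k < i := by
        have hkle : k ≤ i := himax k (by
          rw [← hqe]
          have heq : s((arcs i).2, w) = s((arcs k).1, (arcs k).2) := by rw [hk.1, hk.2]
          rw [SimpleGraph.Walk.edges_cons, ← heq]
          exact List.mem_cons_self)
        rcases lt_or_eq_of_le hkle with h' | h'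
        · exact h'
        · exact absurd (h' ▸ hk.1 : (arcs i).2 = (arcs i).1).symm (hloop i)
      have he' : s((arcs k).1, (arcs k).2) ∉ rest.edges := by
        have heq : s((arcs i).2, w) = s((arcs k).1, (arcs k).2) := by rw [hk.1, hk.2]
        rw [← heq]; exact hre
      obtain ⟨k', hk', hy⟩ := chain _ _ rest hrp k hk.2 he'
      have hk'i : k' = i := hheads k' i hy.symm
      exact absurd (hk'i ▸ hk' : i ≤ k) (not_le.mpr hki)
    · -- v_i = v_k : k = i, w = u_i (backward along arc i)
      have hki : k = i := hheads k i hk.1.symm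
      have hw : w = (arcs k).1 := hk.2
      subst hw
      have hne2 : (arcs k).1 ≠ (arcs i).2 := fun h => hloop k (h.trans hk.1)
      obtain ⟨w2, hadj2, rest2, hrest⟩ := rest.exists_eq_cons_of_ne hne2
      subst hrest
      obtain ⟨k2, hk2 | hk2⟩ := hadj_iff _ _ hadj2
      · -- u_k = u_{k2}, forward along k2, w2 = v_{k2}
        have heq2 : s((arcs k).1, w2) = s((arcs k2).1, (arcs k2).2) := by
          rw [hk2.1, hk2.2]
        have hk2i : k2 < k := by
          have hk2le : k2 ≤ k := hki ▸ himax k2 (by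
            rw [← hqe, SimpleGraph.Walk.edges_cons, SimpleGraph.Walk.edges_cons, ← heq2]
            exact List.mem_cons_of_mem _ (List.mem_cons_self))
          rcases lt_or_eq_of_le hk2le with h' | h'
          · exact h'
          · exfalso
            apply hre
            have : s((arcs i).2, (arcs k).1) = s((arcs k).1, w2) := by
              rw [heq2, h', hk.1, Sym2.eq_swap]
            rw [this, SimpleGraph.Walk.edges_cons]
            exact List.mem_cons_self
        have he2 : s((arcs k2).1, (arcs k2).2) ∉ rest2.edges := by
          have hnd := hrp.isTrail.edges_nodup
          rw [SimpleGraph.Walk.edges_cons, List.nodup_cons] at hnd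
          exact heq2 ▸ hnd.1
        obtain ⟨k', hk', hy⟩ := chain _ _ rest2 hrp.of_cons k2 hk2.2 he2
        have hk'k : k' = k := hheads k' k (hy.symm.trans hk.1)
        exact absurd (hk'k ▸ hk' : k ≤ k2) (not_le.mpr hk2i)
      · -- u_k = v_{k2} : impossible
        have hv : (arcs k2).2 = (arcs k).1 := hk2.1.symm
        have heq2 : s((arcs k).1, w2) = s((arcs k2).1, (arcs k2).2) := by
          rw [hk2.1, hk2.2, Sym2.eq_swap]
        rcases lt_trichotomy k2 k with h' | h' | h'
        · exact absurd hv (hadd k k2 h').1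
        · exact hloop k ((h' ▸ hv : (arcs k).2 = (arcs k).1).symm)
        · -- k < k2 contradicts maximality of i = k
          have hk2le : k2 ≤ k := hki ▸ himax k2 (by
            rw [← hqe, SimpleGraph.Walk.edges_cons, SimpleGraph.Walk.edges_cons, ← heq2]
            exact List.mem_cons_of_mem _ (List.mem_cons_self))
          exact absurd h' (not_lt.mpr hk2le)
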